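/- arXiv:1608.08592 — 3 statements merged into one kernel-verified Lean document; each statement's English description precedes it below -/
import Mathlib

section
/- Let q ≥ 1 and let S be a finite set of words over the alphabet Σ = {x_1, …, x_q}. If the iterated shuffle S^† is co-finite, then for each i ∈ {1, …, q} the collection 𝒯_i is non-empty. -/
/-- `Shuffle u v w` means that the word `w` is an interleaving (shuffle) of the
words `u` and `v`. -/
inductive Shuffle {α : Type*} : List α → List α → List α → Prop
  | nil : Shuffle [] [] []
  | left {a : α} {u v w : List α} : Shuffle u v w → Shuffle (a :: u) v (a :: w)
  | right {a : α} {u v w : List α} : Shuffle u v w → Shuffle u (a :: v) (a :: w)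

/-- `IterShuffle S y` means `y` belongs to the iterated shuffle `S^†`, i.e. `y`
can be obtained by shuffling together finitely many (possibly zero) words of `S`. -/
inductive IterShuffle {α : Type*} (S : Set (List α)) : List α → Prop
  | nil : IterShuffle S []
  | step {u w y : List α} : u ∈ S → IterShuffle S w → Shuffle u w y → IterShuffle S y

/-- `TiNonempty S i` says that the collection `𝒯ᵢ` of subsets `Tᵢ ⊆ S` of the
required form is non-empty: either `{xᵢ} ⊆ S`, or `S` contains words
`xᵢ^{m_{i,1}}, …, xᵢ^{m_{i,hᵢ}}` (with `hᵢ ≥ 2`, all exponents `≥ 2` and of gcd `1`)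
together with words `xᵢ xⱼ^{a_{i,j}}` and `xⱼ^{b_{j,i}} xᵢ` for all `j ≠ i`. -/
def TiNonempty {q : ℕ} (S : Set (List (Fin q))) (i : Fin q) : Prop :=
  [i] ∈ S ∨
    ∃ (M : Finset ℕ) (a b : Fin q → ℕ),
      2 ≤ M.card ∧ (∀ n ∈ M, 2 ≤ n) ∧ M.gcd id = 1 ∧
      (∀ n ∈ M, List.replicate n i ∈ S) ∧
      ∀ j : Fin q, j ≠ i →
        1 ≤ a j ∧ 1 ≤ b j ∧
        i :: List.replicate (a j) j ∈ S ∧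
        List.replicate (b j) j ++ [i] ∈ S


theorem Shuffle.sublist_left {α : Type*} {u v w : List α} (h : Shuffle u v w) : u.Sublist w := by
  induction h with
  | nil => exact List.Sublist.refl _
  | left h ih => exact ih.cons_cons _
  | right h ih => exact ih.cons _

theorem Shuffle.sublist_right {α : Type*} {u v w : List α} (h : Shuffle u v w) : v.Sublist w := by
  induction h with
  | nil => exact List.Sublist.refl _
  | left h ih => exact ih.cons _
  | right h ih => exact ih.cons_cons _

theorem Shuffle.length_eq {α : Type*} {u v w : List α} (h : Shuffle u v w) :
    w.length = u.length + v.length := by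
  induction h with
  | nil => rfl
  | left h ih => simp [ih]; omega
  | right h ih => simp [ih]; omega

theorem Shuffle.mem_or_mem {α : Type*} {u v w : List α} (h : Shuffle u v w) {a : α}
    (ha : a ∈ w) : a ∈ u ∨ a ∈ v := by
  induction h with
  | nil => simp at ha
  | left h ih =>
      rcases List.mem_cons.1 ha with rfl | ha
      · exact Or.inl (List.mem_cons_self)
      · rcases ih ha with h' | h'
        · exact Or.inl (List.mem_cons_of_mem _ h')
        · exact Or.inr h'
  | right h ih =>
      rcases List.mem_cons.1 ha with rfl | ha
      · exact Or.inr (List.mem_cons_self)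
      · rcases ih ha with h' | h'
        · exact Or.inl h'
        · exact Or.inr (List.mem_cons_of_mem _ h')

theorem IterShuffle.exists_mem {α : Type*} {S : Set (List α)} {y : List α}
    (h : IterShuffle S y) {a : α} (ha : a ∈ y) : ∃ u ∈ S, u.Sublist y ∧ a ∈ u := by
  induction h with
  | nil => simp at ha
  | step hu hw hsh ih =>
      rcases hsh.mem_or_mem ha with h' | h'
      · exact ⟨_, hu, hsh.sublist_left, h'⟩
      · obtain ⟨u', hu', hsub, hau'⟩ := ih h'
        exact ⟨u', hu', hsub.trans hsh.sublist_right, hau'⟩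

theorem IterShuffle.dvd_length {α : Type*} {S : Set (List α)} (i : α) (d : ℕ)
    (hd : ∀ u ∈ S, (∀ a ∈ u, a = i) → d ∣ u.length) :
    ∀ {y : List α}, IterShuffle S y → (∀ a ∈ y, a = i) → d ∣ y.length := by
  intro y h
  induction h with
  | nil => intro _; simp
  | step hu hw hsh ih =>
      intro hy
      have hui : ∀ a ∈ _, a = i := fun a hau => hy a (hsh.sublist_left.subset hau)
      have hwi : ∀ a ∈ _, a = i := fun a haw => hy a (hsh.sublist_right.subset haw)
      rw [hsh.length_eq]
      exact Nat.dvd_add (hd _ hu hui) (ih hwi)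

/-- **Lemma (necessity).** For `q ≥ 1` and a finite set `S` of words over the
alphabet `{x₁, …, x_q}`, if the iterated shuffle `S^†` is co-finite then for
each `i` the collection `𝒯ᵢ` is non-empty. -/
theorem Ti_nonempty_of_cofinite (q : ℕ) (hq : 1 ≤ q)
    (S : Set (List (Fin q))) (hS : S.Finite)
    (hcof : {w : List (Fin q) | ¬ IterShuffle S w}.Finite) :
    ∀ i : Fin q, TiNonempty S i := by
  classical
  intro i
  by_cases h1 : [i] ∈ S
  · exact Or.inl h1
  right
  -- the exponent set
  set Efin : Finset ℕ :=
    (hS.toFinset.image List.length).filter (fun k => List.replicate k i ∈ S) with hEdef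
  have hEfin : ∀ k, k ∈ Efin ↔ List.replicate k i ∈ S := by
    intro k
    constructor
    · intro hk; exact (Finset.mem_filter.1 hk).2
    · intro hk
      refine Finset.mem_filter.2 ⟨Finset.mem_image.2 ⟨List.replicate k i, hS.mem_toFinset.2 hk, by simp⟩, hk⟩
  -- divisibility of all attainable powers
  have hdvd : ∀ n : ℕ, IterShuffle S (List.replicate n i) → Efin.gcd id ∣ n := by
    intro n hn
    have key := IterShuffle.dvd_length i (Efin.gcd id) ?_ hn ?_
    · simpa using key
    · intro u hu hui
      have hurep : u = List.replicate u.length i := List.eq_replicate_iff.2 ⟨rfl, hui⟩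
      have hmem : u.length ∈ Efin := (hEfin _).2 (by rw [← hurep]; exact hu)
      exact Finset.gcd_dvd hmem
    · exact fun a ha => List.eq_of_mem_replicate ha
  -- cofiniteness along injective families
  have hBfin : ∀ (f : ℕ → List (Fin q)), Function.Injective f →
      ∃ n, IterShuffle S (f n) := by
    intro f hf
    have hfin : (f ⁻¹' {w | ¬ IterShuffle S w}).Finite :=
      Set.Finite.preimage hf.injOn hcof
    obtain ⟨n, hn⟩ := hfin.infinite_compl.nonempty
    exact ⟨n, not_not.1 hn⟩
  have hBall : ∀ (f : ℕ → List (Fin q)), Function.Injective f →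
      {n | ¬ IterShuffle S (f n)}.Finite := by
    intro f hf
    exact Set.Finite.preimage hf.injOn hcof
  have hrep_inj : Function.Injective (fun n => List.replicate n (i : Fin q)) := by
    intro m n h
    simpa using congrArg List.length h
  -- gcd is 1
  have hgcd1 : Efin.gcd id = 1 := by
    by_contra hne
    have hinf : {n : ℕ | ¬ Efin.gcd id ∣ n}.Infinite := by
      rcases Nat.eq_zero_or_pos (Efin.gcd id) with hd0 | hdpos
      · refine Set.infinite_of_injective_forall_mem (f := fun m : ℕ => m + 1) ?_ ?_
        · intro a b hab; exact Nat.succ_injective hab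
        · intro m; simp [hd0]
      · have hd2 : 2 ≤ Efin.gcd id := by omega
        refine Set.infinite_of_injective_forall_mem
          (f := fun m : ℕ => m * Efin.gcd id + 1) ?_ ?_
        · intro a b hab
          simp only at hab
          have : a * Efin.gcd id = b * Efin.gcd id := by omega
          exact Nat.eq_of_mul_eq_mul_right (by omega) this
        · intro m
          simp only [Set.mem_setOf_eq]
          intro hdvd'
          have hmul : Efin.gcd id ∣ m * Efin.gcd id := dvd_mul_left _ _
          have h1' : Efin.gcd id ∣ 1 := by
            have := Nat.dvd_sub hdvd' hmul
            simpa using this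
          have := Nat.dvd_one.1 h1'
          omega
    refine hinf (Set.Finite.subset (hBall _ hrep_inj) ?_)
    intro n hn
    simp only [Set.mem_setOf_eq] at hn ⊢
    exact fun hit => hn (hdvd n hit)
  -- the finset M
  set M : Finset ℕ := Efin.erase 0 with hMdef
  have hM1 : M.gcd id = 1 := by
    have hdv : M.gcd id ∣ Efin.gcd id := by
      refine Finset.dvd_gcd ?_
      intro b hb
      by_cases hb0 : b = 0
      · simp [hb0]
      · exact Finset.gcd_dvd (Finset.mem_erase.2 ⟨hb0, hb⟩)
    rw [hgcd1] at hdv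
    exact Nat.dvd_one.1 hdv
  have hM2 : ∀ n ∈ M, 2 ≤ n := by
    intro n hn
    have hn0 : n ≠ 0 := (Finset.mem_erase.1 hn).1
    have hnE : n ∈ Efin := (Finset.mem_erase.1 hn).2
    have hn1 : n ≠ 1 := by
      intro h
      apply h1
      have := (hEfin n).1 hnE
      rw [h] at this
      simpa using this
    omega
  have hcard : 2 ≤ M.card := by
    by_contra hc
    push_neg at hc
    interval_cases h : M.card
    · rw [Finset.card_eq_zero] at h
      rw [h] at hM1
      simp at hM1
    · rw [Finset.card_eq_one] at h
      obtain ⟨n, hn⟩ := h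
      have h2 := hM2 n (by simp [hn])
      rw [hn] at hM1
      simp [Finset.gcd_singleton] at hM1
      omega
  -- the a and b words
  have hab : ∀ j : Fin q, ∃ a b : ℕ, j ≠ i →
      (1 ≤ a ∧ 1 ≤ b ∧ i :: List.replicate a j ∈ S ∧ List.replicate b j ++ [i] ∈ S) := by
    intro j
    by_cases hj : j = i
    · exact ⟨0, 0, fun h => absurd hj h⟩
    have hij : i ≠ j := fun h => hj h.symm
    -- a part
    have hinj1 : Function.Injective (fun n : ℕ => i :: List.replicate n j) := by
      intro m n h
      simpa using congrArg List.length h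
    obtain ⟨n, hn⟩ := hBfin _ hinj1
    have hmemi : i ∈ i :: List.replicate n j := List.mem_cons_self
    obtain ⟨u, huS, hsub, hiu⟩ := hn.exists_mem hmemi
    have hsub' : u.Sublist ([i] ++ List.replicate n j) := hsub
    rw [List.sublist_append_iff] at hsub'
    obtain ⟨u₁, u₂, rfl, hsub1, hsub2⟩ := hsub'
    obtain ⟨k, hk, rfl⟩ := List.sublist_replicate_iff.1 hsub2
    have hiu₁ : i ∈ u₁ := by
      rcases List.mem_append.1 hiu with h | h
      · exact h
      · exact absurd (List.eq_of_mem_replicate h) hij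
    have hu₁ : u₁ = [i] := by
      rcases List.sublist_singleton.1 hsub1 with h | h
      · rw [h] at hiu₁; simp at hiu₁
      · exact h
    rw [hu₁] at huS
    have hk1 : 1 ≤ k := by
      by_contra hk0
      push_neg at hk0
      interval_cases k
      simp at huS
      exact h1 huS
    -- b part
    have hinj2 : Function.Injective (fun n : ℕ => List.replicate n j ++ [i]) := by
      intro m n h
      simpa using congrArg List.length h
    obtain ⟨m, hm⟩ := hBfin _ hinj2
    have hmemi2 : i ∈ List.replicate m j ++ [i] := by simp
    obtain ⟨v, hvS, hvsub, hiv⟩ := hm.exists_mem hmemi2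
    rw [List.sublist_append_iff] at hvsub
    obtain ⟨v₁, v₂, rfl, hvsub1, hvsub2⟩ := hvsub
    obtain ⟨l, hl, rfl⟩ := List.sublist_replicate_iff.1 hvsub1
    have hiv₂ : i ∈ v₂ := by
      rcases List.mem_append.1 hiv with h | h
      · exact absurd (List.eq_of_mem_replicate h) hij
      · exact h
    have hv₂ : v₂ = [i] := by
      rcases List.sublist_singleton.1 hvsub2 with h | h
      · rw [h] at hiv₂; simp at hiv₂
      · exact h
    rw [hv₂] at hvS
    have hl1 : 1 ≤ l := by
      by_contra hl0
      push_neg at hl0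
      interval_cases l
      simp at hvS
      exact h1 hvS
    exact ⟨k, l, fun _ => ⟨hk1, hl1, by simpa using huS, hvS⟩⟩
  choose a b hab' using hab
  refine ⟨M, a, b, hcard, hM2, hM1, ?_, hab'⟩
  intro n hn
  exact (hEfin n).1 (Finset.mem_of_mem_erase hn)
end

section
/- Let q ≥ 1 and let S be a finite set of words over the alphabet Σ = {x_1, …, x_q}. Assume that for each i ∈ {1, …, q} the collection 𝒯_i is non-empty. For each i: if {x_i} ∈ 𝒯_i (i.e., x_i ∈ S), set g_i = −1 and m_{i,1} = a_{i,j} = b_{j,i} = 0 for all j; otherwise choose any T_i ∈ 𝒯_i of the second form, with parameters m_{i,1} < m_{i,2} < ⋯ < m_{i,h_i}, a_{i,j}, b_{j,i}, and set g_i = g(m_{i,1}, m_{i,2}, …, m_{i,h_i}). Then S^† contains every word over Σ of length at least Σ_{i=1}^q g_i + q + (q−1) · (max_i m_{i,1}) · (max_{i, j, j ≠ i} (a_{i,j}, b_{j,i})). -/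
theorem shuffle_nil_left {α : Type*} : ∀ w : List α, Shuffle [] w w
  | [] => .nil
  | _ :: w => .right (shuffle_nil_left w)

theorem Shuffle.count_eq {α : Type*} [DecidableEq α] {u v w : List α} (h : Shuffle u v w)
    (c : α) : w.count c = u.count c + v.count c := by
  induction h with
  | nil => simp
  | left h ih => simp [List.count_cons, ih]; omega
  | right h ih => simp [List.count_cons, ih]; omega

theorem Shuffle.mem_right {α : Type*} {u v w : List α} (h : Shuffle u v w)
    {c : α} (hc : c ∈ v) : c ∈ w := by
  induction h with
  | nil => exact hc
  | left h ih => exact List.mem_cons_of_mem _ (ih hc)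
  | right h ih =>
    rcases List.mem_cons.mp hc with h1 | h2
    · simp [h1]
    · exact List.mem_cons_of_mem _ (ih h2)

theorem Shuffle.append {α : Type*} {u1 v1 w1 u2 v2 w2 : List α}
    (h1 : Shuffle u1 v1 w1) (h2 : Shuffle u2 v2 w2) :
    Shuffle (u1 ++ u2) (v1 ++ v2) (w1 ++ w2) := by
  induction h1 with
  | nil => simpa using h2
  | left h ih => exact .left ih
  | right h ih => exact .right ih

theorem shuffle_nil_left_eq {α : Type*} {u w y : List α} (h : Shuffle u w y) (hu : u = []) :
    y = w := by
  induction h with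
  | nil => rfl
  | left h ih => simp at hu
  | right h ih => simp [ih hu]

theorem shuffle_assoc {α : Type*} {u c y : List α} (h2 : Shuffle u c y) :
    ∀ {d e : List α}, Shuffle d e u → ∃ z, Shuffle e c z ∧ Shuffle d z y := by
  induction h2 with
  | nil =>
    intro d e h1
    cases h1
    exact ⟨[], .nil, .nil⟩
  | @left x u' c' y' h ih =>
    intro d e h1
    cases h1 with
    | left h1' =>
      obtain ⟨z, hz1, hz2⟩ := ih h1'
      exact ⟨z, hz1, .left hz2⟩
    | right h1' =>
      obtain ⟨z, hz1, hz2⟩ := ih h1'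
      exact ⟨x :: z, .left hz1, .right hz2⟩
  | @right x u' c' y' h ih =>
    intro d e h1
    obtain ⟨z, hz1, hz2⟩ := ih h1
    exact ⟨x :: z, .right hz1, .right hz2⟩

theorem IterShuffle.shuffle_closed {α : Type*} {S : Set (List α)} {u : List α}
    (hu : IterShuffle S u) :
    ∀ {w y : List α}, IterShuffle S w → Shuffle u w y → IterShuffle S y := by
  induction hu with
  | nil =>
    intro w y hw h
    rw [shuffle_nil_left_eq h rfl]
    exact hw
  | step huS hw' hsh ih =>
    intro w y hw h
    obtain ⟨z, hz1, hz2⟩ := shuffle_assoc h hsh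
    exact .step huS (ih hw hz1) hz2

theorem extract_replicate {α : Type*} [DecidableEq α] (j : α) :
    ∀ (z : List α) (k : ℕ), k ≤ z.count j → ∃ w, Shuffle (List.replicate k j) w z := by
  intro z
  induction z with
  | nil =>
    intro k hk
    simp at hk
    exact ⟨[], by simpa [hk] using Shuffle.nil⟩
  | cons c z' ih =>
    intro k hk
    by_cases hc : c = j
    · cases k with
      | zero => exact ⟨c :: z', shuffle_nil_left _⟩
      | succ k' =>
        have hk' : k' ≤ z'.count j := by simp [List.count_cons, hc] at hk; omega
        obtain ⟨w, hw⟩ := ih k' hk'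
        exact ⟨w, by rw [hc]; simpa [List.replicate_succ] using Shuffle.left hw⟩
    · have hk' : k ≤ z'.count j := by
        simpa [List.count_cons, hc, Ne.symm hc] using hk
      obtain ⟨w, hw⟩ := ih k hk'
      exact ⟨c :: w, .right hw⟩

theorem shuffle_replicate {α : Type*} (i : α) :
    ∀ k l : ℕ, Shuffle (List.replicate k i) (List.replicate l i) (List.replicate (k + l) i) := by
  intro k
  induction k with
  | zero => intro l; simpa using shuffle_nil_left _
  | succ k ih =>
    intro l
    have := Shuffle.left (a := i) (ih l)
    simpa [List.replicate_succ, Nat.succ_add] using this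

theorem iterShuffle_replicate_single {α : Type*} {S : Set (List α)} {i : α} (h : [i] ∈ S) :
    ∀ n, IterShuffle S (List.replicate n i)
  | 0 => .nil
  | n + 1 => .step h (iterShuffle_replicate_single h n)
      (by simpa [List.replicate_succ] using Shuffle.left (shuffle_nil_left (List.replicate n i)))

theorem iterShuffle_replicate_of_sum {α : Type*} {S : Set (List α)} {i : α} (M : Finset ℕ)
    (hMS : ∀ n ∈ M, List.replicate n i ∈ S) (hMpos : ∀ n ∈ M, 1 ≤ n) :
    ∀ (N : ℕ) (c : ℕ → ℕ), N = ∑ n ∈ M, c n * n → IterShuffle S (List.replicate N i) := by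
  intro N
  induction N using Nat.strong_induction_on with
  | _ N ih =>
    intro c hc
    by_cases h0 : ∀ n ∈ M, c n = 0
    · have hN : N = 0 := by
        rw [hc]
        exact Finset.sum_eq_zero fun n hn => by rw [h0 n hn]; ring
      rw [hN]
      exact .nil
    · push_neg at h0
      obtain ⟨m, hm, hcm⟩ := h0
      have hm1 : 1 ≤ m := hMpos m hm
      have hcm1 : 1 ≤ c m := Nat.one_le_iff_ne_zero.mpr hcm
      set c' : ℕ → ℕ := Function.update c m (c m - 1) with hc'
      have hsum : ∑ n ∈ M, c' n * n + m = N := by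
        rw [hc, ← Finset.sum_erase_add M _ hm, ← Finset.sum_erase_add M (fun n => c n * n) hm]
        have he : ∀ n ∈ M.erase m, c' n * n = c n * n := fun n hn => by
          rw [hc', Function.update_of_ne (Finset.ne_of_mem_erase hn)]
        rw [Finset.sum_congr rfl he]
        have hcm' : c' m = c m - 1 := Function.update_self m _ c
        have : c' m * m + m = c m * m := by
          rw [hcm']
          cases' hc : c m with k
          · omega
          · simp [Nat.succ_sub_one]; ring
        omega
      have hmN : m ≤ N := by omega
      have hrec := ih (N - m) (by omega) c' (by omega)
      refine .step (hMS m hm) hrec ?_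
      have := shuffle_replicate i m (N - m)
      rwa [show m + (N - m) = N by omega] at this

theorem length_eq_sum_count {β : Type*} [DecidableEq β] (act : Finset β) :
    ∀ l : List β, (∀ c ∈ l, c ∈ act) → l.length = ∑ j ∈ act, l.count j := by
  intro l
  induction l with
  | nil => simp
  | cons c l ih =>
    intro h
    have hc : c ∈ act := h c (by simp)
    have hih := ih fun x hx => h x (by simp [hx])
    simp only [List.length_cons, hih, List.count_cons]
    rw [Finset.sum_add_distrib]
    have h1 : ∑ j ∈ act, (if c == j then 1 else 0) = 1 := by
      simp only [beq_iff_eq]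
      rw [Finset.sum_ite_eq act c (fun _ => 1)]
      simp [hc]
    omega

theorem iterShuffle_of_rep_counts {β : Type*} [DecidableEq β] {S : Set (List β)} :
    ∀ (n : ℕ) (y : List β), y.length ≤ n →
      (∀ i ∈ y, IterShuffle S (List.replicate (y.count i) i)) → IterShuffle S y := by
  intro n
  induction n with
  | zero =>
    intro y hy _
    cases y with
    | nil => exact .nil
    | cons c z => simp at hy
  | succ n ih =>
    intro y hy hrep
    cases y with
    | nil => exact .nil
    | cons c z =>
      have hiy : c ∈ c :: z := by simp
      obtain ⟨w, hw⟩ := extract_replicate c (c :: z) ((c :: z).count c) le_rfl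
      have hcnt := fun x => hw.count_eq x
      have hlen := hw.length_eq
      have hc1 : 0 < (c :: z).count c := by simp [List.count_cons]
      have hlen' : (c :: z).length = (c :: z).count c + w.length := by
        simpa using hlen
      have hwlen : w.length ≤ n := by
        simp only [List.length_cons] at hlen' hy
        omega
      have hwc : w.count c = 0 := by
        have := hcnt c
        simp [List.count_replicate] at this
        omega
      have hwrep : ∀ i ∈ w, IterShuffle S (List.replicate (w.count i) i) := by
        intro i hiw
        have hiy' : i ∈ c :: z := hw.mem_right hiw
        have hic : i ≠ c := by
          intro e
          rw [e] at hiw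
          have := List.count_pos_iff.mpr hiw
          omega
        have hcw : w.count i = (c :: z).count i := by
          have := hcnt i
          simp [List.count_replicate, hic, Ne.symm hic] at this ⊢
          omega
        rw [hcw]
        exact hrep i hiy'
      exact (hrep c hiy).shuffle_closed (ih w hwlen hwrep) hw

theorem inner_lemma {q : ℕ} {S : Set (List (Fin q))} (a b : Fin q → Fin q → ℕ)
    (act : Finset (Fin q)) (i : Fin q) (A : ℕ) (Bz : ℤ) (m1i : ℕ) (M : Finset ℕ)
    (hm1M : m1i ∈ M)
    (hMS : ∀ n ∈ M, List.replicate n i ∈ S)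
    (hMpos : ∀ n ∈ M, 1 ≤ n)
    (hconn : ∀ j ∈ act.erase i,
      i :: List.replicate (a i j) j ∈ S ∧ List.replicate (b j i) j ++ [i] ∈ S)
    (haA : ∀ j ∈ act.erase i, a i j ≤ A ∧ b j i ≤ A)
    (IHout : ∀ y : List (Fin q), (∀ c ∈ y, c ∈ act.erase i) → Bz ≤ (y.length : ℤ) →
      IterShuffle S y) :
    ∀ (t k : ℕ) (y : List (Fin q)), (∀ c ∈ y, c ∈ act) → y.count i = t + m1i * k →
      Bz + (t : ℤ) * A ≤ (y.length : ℤ) - (y.count i : ℤ) →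
      (1 ≤ t → ((act.erase i).card : ℤ) * (2 * (A : ℤ) - 2) + 1 + ((t : ℤ) - 1) * A
          ≤ (y.length : ℤ) - (y.count i : ℤ)) →
      IterShuffle S y := by
  intro t
  induction t with
  | zero =>
    intro k y hmem hcnt h1 _h2
    have hrepi : IterShuffle S (List.replicate (y.count i) i) := by
      apply iterShuffle_replicate_of_sum M hMS hMpos _ (fun n => if n = m1i then k else 0)
      rw [Finset.sum_eq_single_of_mem m1i hm1M (fun n _ hne => by simp [hne])]
      simp [hcnt, Nat.mul_comm]
    obtain ⟨w, hw⟩ := extract_replicate i y (y.count i) le_rfl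
    have hwc : w.count i = 0 := by
      have := hw.count_eq i
      simp [List.count_replicate] at this
      omega
    have hwmem : ∀ c ∈ w, c ∈ act.erase i := by
      intro c hcw
      refine Finset.mem_erase.mpr ⟨?_, hmem c (hw.mem_right hcw)⟩
      intro e
      rw [e] at hcw
      exact absurd (List.count_pos_iff.mpr hcw) (by omega)
    have hwlen : Bz ≤ (w.length : ℤ) := by
      have e1 : y.length = y.count i + w.length := by simpa using hw.length_eq
      have e1' : (y.length : ℤ) = (y.count i : ℤ) + w.length := by exact_mod_cast e1
      simp only [Nat.cast_zero, zero_mul, add_zero] at h1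
      linarith
    exact hrepi.shuffle_closed (IHout w hwmem hwlen) hw
  | succ t ihT =>
    intro k y hmem hcnt h1 h2
    have h2' := h2 (by omega)
    have hipos : 0 < y.count i := by omega
    have hiy : i ∈ y := List.count_pos_iff.mp hipos
    have hiact : i ∈ act := hmem i hiy
    obtain ⟨y₁, y₂, hy⟩ := List.append_of_mem hiy
    subst hy
    have hcji : (y₁ ++ i :: y₂).count i = y₁.count i + y₂.count i + 1 := by
      simp [List.count_append, List.count_cons]
      omega
    have hlensum : (y₁ ++ i :: y₂).length = ∑ j ∈ act, (y₁ ++ i :: y₂).count j :=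
      length_eq_sum_count act _ hmem
    have hsplit : (y₁ ++ i :: y₂).count i + ∑ j ∈ act.erase i, (y₁ ++ i :: y₂).count j
        = ∑ j ∈ act, (y₁ ++ i :: y₂).count j :=
      Finset.add_sum_erase act (fun j => (y₁ ++ i :: y₂).count j) hiact
    have htA : (0 : ℤ) ≤ (t : ℤ) * A := by positivity
    have hex : ∃ j ∈ act.erase i, a i j ≤ y₂.count j ∨ b j i ≤ y₁.count j := by
      by_contra hno
      push_neg at hno
      have hsumE : ∑ j ∈ act.erase i, (y₁ ++ i :: y₂).count j + 2 * (act.erase i).card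
          ≤ 2 * A * (act.erase i).card := by
        have hper : ∀ j ∈ act.erase i, (y₁ ++ i :: y₂).count j + 2 ≤ 2 * A := by
          intro j hj
          have hji : j ≠ i := Finset.ne_of_mem_erase hj
          have hcj : (y₁ ++ i :: y₂).count j = y₁.count j + y₂.count j := by
            simp [List.count_append, List.count_cons, Ne.symm hji]
          obtain ⟨u1, u2⟩ := hno j hj
          obtain ⟨v1, v2⟩ := haA j hj
          omega
        calc ∑ j ∈ act.erase i, (y₁ ++ i :: y₂).count j + 2 * (act.erase i).card
            = ∑ j ∈ act.erase i, ((y₁ ++ i :: y₂).count j + 2) := by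
              rw [Finset.sum_add_distrib, Finset.sum_const, smul_eq_mul]
              ring
          _ ≤ ∑ _j ∈ act.erase i, 2 * A := Finset.sum_le_sum hper
          _ = 2 * A * (act.erase i).card := by
              rw [Finset.sum_const, smul_eq_mul]
              ring
      have hnonI : ((y₁ ++ i :: y₂).length : ℤ) - ((y₁ ++ i :: y₂).count i : ℤ)
          = ((∑ j ∈ act.erase i, (y₁ ++ i :: y₂).count j : ℕ) : ℤ) := by
        rw [hlensum, ← hsplit]
        push_cast
        ring
      have hsumE' : ((∑ j ∈ act.erase i, (y₁ ++ i :: y₂).count j : ℕ) : ℤ)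
          + 2 * ((act.erase i).card : ℤ) ≤ 2 * (A : ℤ) * (act.erase i).card := by
        exact_mod_cast hsumE
      have hexp : ((act.erase i).card : ℤ) * (2 * (A : ℤ) - 2)
          = 2 * (A : ℤ) * (act.erase i).card - 2 * (act.erase i).card := by ring
      have hcast : (((t : ℕ) + 1 : ℕ) : ℤ) - 1 = (t : ℤ) := by push_cast; ring
      rw [hcast] at h2'
      linarith [h2', hnonI, hsumE', hexp, htA]
    obtain ⟨j, hjE, hcase⟩ := hex
    have hji : j ≠ i := Finset.ne_of_mem_erase hjE
    obtain ⟨hconnL, hconnR⟩ := hconn j hjE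
    obtain ⟨haj, hbj⟩ := haA j hjE
    have hcast : (((t : ℕ) + 1 : ℕ) : ℤ) - 1 = (t : ℤ) := by push_cast; ring
    rw [hcast] at h2'
    have hcast2 : (((t : ℕ) + 1 : ℕ) : ℤ) = (t : ℤ) + 1 := by push_cast; ring
    rw [hcast2] at h1
    rcases hcase with hafter | hbefore
    · obtain ⟨w₂, hw₂⟩ := extract_replicate j y₂ (a i j) hafter
      have hsh : Shuffle (i :: List.replicate (a i j) j) (y₁ ++ w₂) (y₁ ++ i :: y₂) := by
        simpa using Shuffle.append (shuffle_nil_left y₁) (Shuffle.left hw₂)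
      have hw₂i : w₂.count i = y₂.count i := by
        have := hw₂.count_eq i
        simp [List.count_replicate, hji] at this
        omega
      have hw₂len : y₂.length = a i j + w₂.length := by simpa using hw₂.length_eq
      refine IterShuffle.step hconnL ?_ hsh
      have hcnt' : (y₁ ++ w₂).count i = y₁.count i + y₂.count i := by
        rw [List.count_append, hw₂i]
      have hlen' : (y₁ ++ w₂).length = y₁.length + w₂.length := List.length_append
      have hlen0 : (y₁ ++ i :: y₂).length = y₁.length + y₂.length + 1 := by
        simp [List.length_append]
        omega
      apply ihT k (y₁ ++ w₂)
      · intro c hc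
        rcases List.mem_append.mp hc with h | h
        · exact hmem c (by simp [h])
        · have hy2 : c ∈ y₂ := hw₂.mem_right h
          exact hmem c (by simp [List.mem_append, hy2])
      · omega
      · have e1 : ((y₁ ++ w₂).length : ℤ) = (y₁.length : ℤ) + w₂.length := by
          exact_mod_cast hlen'
        have e2 : ((y₁ ++ w₂).count i : ℤ) = (y₁.count i : ℤ) + y₂.count i := by
          exact_mod_cast hcnt'
        have e3 : ((y₁ ++ i :: y₂).length : ℤ) = (y₁.length : ℤ) + y₂.length + 1 := by
          exact_mod_cast hlen0
        have e4 : ((y₁ ++ i :: y₂).count i : ℤ) = (y₁.count i : ℤ) + y₂.count i + 1 := by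
          exact_mod_cast hcji
        have e5 : (y₂.length : ℤ) = (a i j : ℤ) + w₂.length := by exact_mod_cast hw₂len
        have e6 : (a i j : ℤ) ≤ A := by exact_mod_cast haj
        linarith
      · intro ht
        have e1 : ((y₁ ++ w₂).length : ℤ) = (y₁.length : ℤ) + w₂.length := by
          exact_mod_cast hlen'
        have e2 : ((y₁ ++ w₂).count i : ℤ) = (y₁.count i : ℤ) + y₂.count i := by
          exact_mod_cast hcnt'
        have e3 : ((y₁ ++ i :: y₂).length : ℤ) = (y₁.length : ℤ) + y₂.length + 1 := by
          exact_mod_cast hlen0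
        have e4 : ((y₁ ++ i :: y₂).count i : ℤ) = (y₁.count i : ℤ) + y₂.count i + 1 := by
          exact_mod_cast hcji
        have e5 : (y₂.length : ℤ) = (a i j : ℤ) + w₂.length := by exact_mod_cast hw₂len
        have e6 : (a i j : ℤ) ≤ A := by exact_mod_cast haj
        have e7 : (0:ℤ) ≤ A := by positivity
        linarith
    · obtain ⟨w₁, hw₁⟩ := extract_replicate j y₁ (b j i) hbefore
      have hsh : Shuffle (List.replicate (b j i) j ++ [i]) (w₁ ++ y₂) (y₁ ++ i :: y₂) :=
        Shuffle.append hw₁ (Shuffle.left (shuffle_nil_left y₂))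
      have hw₁i : w₁.count i = y₁.count i := by
        have := hw₁.count_eq i
        simp [List.count_replicate, hji] at this
        omega
      have hw₁len : y₁.length = b j i + w₁.length := by simpa using hw₁.length_eq
      refine IterShuffle.step hconnR ?_ hsh
      have hcnt' : (w₁ ++ y₂).count i = y₁.count i + y₂.count i := by
        rw [List.count_append, hw₁i]
      have hlen' : (w₁ ++ y₂).length = w₁.length + y₂.length := List.length_append
      have hlen0 : (y₁ ++ i :: y₂).length = y₁.length + y₂.length + 1 := by
        simp [List.length_append]
        omega
      apply ihT k (w₁ ++ y₂)
      · intro c hc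
        rcases List.mem_append.mp hc with h | h
        · have hy1 : c ∈ y₁ := hw₁.mem_right h
          exact hmem c (by simp [List.mem_append, hy1])
        · exact hmem c (by simp [h])
      · omega
      · have e1 : ((w₁ ++ y₂).length : ℤ) = (w₁.length : ℤ) + y₂.length := by
          exact_mod_cast hlen'
        have e2 : ((w₁ ++ y₂).count i : ℤ) = (y₁.count i : ℤ) + y₂.count i := by
          exact_mod_cast hcnt'
        have e3 : ((y₁ ++ i :: y₂).length : ℤ) = (y₁.length : ℤ) + y₂.length + 1 := by
          exact_mod_cast hlen0
        have e4 : ((y₁ ++ i :: y₂).count i : ℤ) = (y₁.count i : ℤ) + y₂.count i + 1 := by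
          exact_mod_cast hcji
        have e5 : (y₁.length : ℤ) = (b j i : ℤ) + w₁.length := by exact_mod_cast hw₁len
        have e6 : (b j i : ℤ) ≤ A := by exact_mod_cast hbj
        linarith
      · intro ht
        have e1 : ((w₁ ++ y₂).length : ℤ) = (w₁.length : ℤ) + y₂.length := by
          exact_mod_cast hlen'
        have e2 : ((w₁ ++ y₂).count i : ℤ) = (y₁.count i : ℤ) + y₂.count i := by
          exact_mod_cast hcnt'
        have e3 : ((y₁ ++ i :: y₂).length : ℤ) = (y₁.length : ℤ) + y₂.length + 1 := by
          exact_mod_cast hlen0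
        have e4 : ((y₁ ++ i :: y₂).count i : ℤ) = (y₁.count i : ℤ) + y₂.count i + 1 := by
          exact_mod_cast hcji
        have e5 : (y₁.length : ℤ) = (b j i : ℤ) + w₁.length := by exact_mod_cast hw₁len
        have e6 : (b j i : ℤ) ≤ A := by exact_mod_cast hbj
        have e7 : (0:ℤ) ≤ A := by positivity
        linarith

theorem main_lemma {q : ℕ} (S : Set (List (Fin q)))
    (g : Fin q → ℤ) (m1 : Fin q → ℕ) (a b : Fin q → Fin q → ℕ) (G A : ℕ)
    (hG : ∀ i, m1 i ≤ G) (hA : ∀ i j : Fin q, j ≠ i → a i j ≤ A ∧ b j i ≤ A)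
    (hchoice : ∀ i : Fin q,
      ([i] ∈ S ∧ g i = -1 ∧ m1 i = 0 ∧ ∀ j : Fin q, a i j = 0 ∧ b j i = 0) ∨
      (∃ M : Finset ℕ,
        2 ≤ M.card ∧ (∀ n ∈ M, 2 ≤ n) ∧ M.gcd id = 1 ∧
        (∀ n ∈ M, List.replicate n i ∈ S) ∧
        (m1 i ∈ M ∧ ∀ n ∈ M, m1 i ≤ n) ∧
        (∀ j : Fin q, j ≠ i →
          1 ≤ a i j ∧ 1 ≤ b j i ∧
          i :: List.replicate (a i j) j ∈ S ∧
          List.replicate (b j i) j ++ [i] ∈ S) ∧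
        (∃ gn : ℕ, g i = (gn : ℤ) ∧
          ¬ (∃ c : ℕ → ℕ, gn = ∑ n ∈ M, c n * n) ∧
          ∀ N : ℕ, gn < N → ∃ c : ℕ → ℕ, N = ∑ n ∈ M, c n * n))) :
    ∀ (n : ℕ) (act : Finset (Fin q)) (y : List (Fin q)), act.card ≤ n →
      (∀ c ∈ y, c ∈ act) →
      (∑ x ∈ act, g x) + (act.card : ℤ) + ((act.card : ℤ) - 1) * G * A ≤ (y.length : ℤ) →
      IterShuffle S y := by
  intro n
  induction n with
  | zero =>
    intro act y hcard hmem _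
    have hact : act = ∅ := Finset.card_eq_zero.mp (Nat.le_zero.mp hcard)
    subst hact
    cases y with
    | nil => exact .nil
    | cons c z => exact absurd (hmem c (by simp)) (by simp)
  | succ n ih =>
    intro act y hcard hmem hlen
    by_cases hrep : ∀ i ∈ y, IterShuffle S (List.replicate (y.count i) i)
    · exact iterShuffle_of_rep_counts y.length y le_rfl hrep
    · push_neg at hrep
      obtain ⟨i, hiy, hni⟩ := hrep
      have hiact : i ∈ act := hmem i hiy
      rcases hchoice i with ⟨hiS, -⟩ |
        ⟨M, hMcard, hM2, hgcd, hMS, ⟨hm1M, hm1min⟩, hconn, gn, hgi, hgnonrep, hgall⟩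
      · exact absurd (iterShuffle_replicate_single hiS _) hni
      · have hm1_2 : 2 ≤ m1 i := hM2 _ hm1M
        have hGi : m1 i ≤ G := hG i
        have hMpos : ∀ nn ∈ M, 1 ≤ nn := fun nn h => le_trans one_le_two (hM2 nn h)
        have hle : y.count i ≤ gn := by
          by_contra hgt
          push_neg at hgt
          obtain ⟨c, hc⟩ := hgall _ hgt
          exact hni (iterShuffle_replicate_of_sum M hMS hMpos _ c hc)
        set t0 := y.count i % m1 i with ht0
        have hk0 : y.count i = t0 + m1 i * (y.count i / m1 i) := by
          rw [ht0]
          exact (Nat.mod_add_div (y.count i) (m1 i)).symm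
        have ht0pos : 1 ≤ t0 := by
          rcases Nat.eq_zero_or_pos t0 with h0 | h
          · exfalso
            apply hni
            apply iterShuffle_replicate_of_sum M hMS hMpos _
              (fun nn => if nn = m1 i then y.count i / m1 i else 0)
            rw [Finset.sum_eq_single_of_mem (m1 i) hm1M (fun nn _ hne => by simp [hne])]
            rw [if_pos rfl]
            rw [h0] at hk0
            conv_lhs => rw [hk0]
            ring
          · exact h
        have ht0lt : t0 < m1 i := by
          rw [ht0]
          exact Nat.mod_lt _ (by omega)
        have hcard_e : (act.erase i).card + 1 = act.card := Finset.card_erase_add_one hiact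
        have hsum_split : g i + ∑ x ∈ act.erase i, g x = ∑ x ∈ act, g x :=
          Finset.add_sum_erase act g hiact
        have hgE : -(((act.erase i).card : ℕ) : ℤ) ≤ ∑ x ∈ act.erase i, g x := by
          have hper : ∀ x ∈ act.erase i, (-1 : ℤ) ≤ g x := by
            intro x _
            rcases hchoice x with ⟨-, hgx, -⟩ | ⟨-, -, -, -, -, -, -, gnn, hgx, -⟩
            · rw [hgx]
            · rw [hgx]
              have := Int.natCast_nonneg gnn
              omega
          calc -(((act.erase i).card : ℕ) : ℤ) = ∑ _x ∈ act.erase i, (-1 : ℤ) := by simp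
            _ ≤ ∑ x ∈ act.erase i, g x := Finset.sum_le_sum hper
        have key : (∑ x ∈ act.erase i, g x) + (act.card : ℤ) + ((act.card : ℤ) - 1) * G * A
            ≤ (y.length : ℤ) - (y.count i : ℤ) := by
          have hcg : (y.count i : ℤ) ≤ g i := by rw [hgi]; exact_mod_cast hle
          linarith [hlen, hsum_split]
        have hEne : (act.erase i).Nonempty := by
          rw [Finset.nonempty_iff_ne_empty]
          intro hE0
          have hc0 : (act.erase i).card = 0 := by rw [hE0]; simp
          have hc1 : act.card = 1 := by omega
          have hc1' : (act.card : ℤ) = 1 := by exact_mod_cast hc1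
          have hkey' : (1 : ℤ) ≤ (y.length : ℤ) - y.count i := by
            rw [hE0, hc1'] at key
            simp at key
            linarith [key]
          obtain ⟨x, hx⟩ := Finset.card_eq_one.mp hc1
          have hxi : x = i := by
            rw [hx] at hiact
            exact (Finset.mem_singleton.mp hiact).symm
          have hcl : y.count i = y.length := by
            apply List.count_eq_length.mpr
            intro c hc
            have h1 := hmem c hc
            rw [hx, hxi] at h1
            exact (Finset.mem_singleton.mp h1).symm
          omega
        have hEc1 : 1 ≤ (act.erase i).card := Finset.card_pos.mpr hEne
        have hA1 : 1 ≤ A := by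
          obtain ⟨j, hj⟩ := hEne
          have hji : j ≠ i := Finset.ne_of_mem_erase hj
          have h1a := (hconn j hji).1
          have h2a := (hA i j hji).1
          omega
        -- integer facts
        have hEcz : (((act.erase i).card : ℕ) : ℤ) = (act.card : ℤ) - 1 := by
          rw [← hcard_e]
          push_cast
          ring
        have hAz : (0 : ℤ) ≤ (A : ℤ) := Int.natCast_nonneg A
        have hA1z : (1 : ℤ) ≤ (A : ℤ) := by exact_mod_cast hA1
        have hG2z : (2 : ℤ) ≤ (G : ℤ) := by exact_mod_cast le_trans hm1_2 hGi
        have hEc1z : (1 : ℤ) ≤ (((act.erase i).card : ℕ) : ℤ) := by exact_mod_cast hEc1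
        have ht0Gz : (t0 : ℤ) ≤ (G : ℤ) - 1 := by
          have h1 : (t0 : ℤ) < (G : ℤ) := by exact_mod_cast lt_of_lt_of_le ht0lt hGi
          linarith
        have ht0z : (1 : ℤ) ≤ (t0 : ℤ) := by exact_mod_cast ht0pos
        apply inner_lemma a b act i A
          ((∑ x ∈ act.erase i, g x) + (((act.erase i).card : ℕ) : ℤ)
            + ((((act.erase i).card : ℕ) : ℤ) - 1) * G * A) (m1 i) M hm1M hMS hMpos
          (fun j hj => ⟨(hconn j (Finset.ne_of_mem_erase hj)).2.2.1,
            (hconn j (Finset.ne_of_mem_erase hj)).2.2.2⟩)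
          (fun j hj => hA i j (Finset.ne_of_mem_erase hj))
          (fun y' hm' hl' => ih (act.erase i) y' (by omega) hm' hl')
          t0 (y.count i / m1 i) y hmem hk0
        · -- hyp1
          have ht0A : (t0 : ℤ) * A ≤ (G : ℤ) * A :=
            mul_le_mul_of_nonneg_right (by linarith) hAz
          have hexp : ((((act.erase i).card : ℕ) : ℤ) - 1) * G * A
              = (((act.erase i).card : ℕ) : ℤ) * ((G : ℤ) * A) - (G : ℤ) * A := by ring
          have hexp2 : ((act.card : ℤ) - 1) * G * A
              = (((act.erase i).card : ℕ) : ℤ) * ((G : ℤ) * A) := by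
            rw [← hEcz]; ring
          rw [hexp2] at key
          linarith [key]
        · -- hyp2
          intro _
          have hnonI : (1 : ℤ) + (((act.erase i).card : ℕ) : ℤ) * ((G : ℤ) * A)
              ≤ (y.length : ℤ) - (y.count i : ℤ) := by
            have hexp2 : ((act.card : ℤ) - 1) * G * A
                = (((act.erase i).card : ℕ) : ℤ) * ((G : ℤ) * A) := by
              rw [← hEcz]; ring
            rw [hexp2] at key
            linarith [key, hgE, hEcz]
          have ht0A : ((t0 : ℤ) - 1) * A ≤ ((G : ℤ) - 2) * A :=
            mul_le_mul_of_nonneg_right (by linarith) hAz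
          have hid : (((act.erase i).card : ℕ) : ℤ) * ((G : ℤ) * A)
              - (((act.erase i).card : ℕ) : ℤ) * (2 * (A : ℤ) - 2) - ((G : ℤ) - 2) * A
              = ((((act.erase i).card : ℕ) : ℤ) - 1) * (((G : ℤ) - 2) * A)
                + 2 * (((act.erase i).card : ℕ) : ℤ) := by ring
          have hpos : (0 : ℤ) ≤ ((((act.erase i).card : ℕ) : ℤ) - 1) * (((G : ℤ) - 2) * A) :=
            mul_nonneg (by linarith) (mul_nonneg (by linarith) hAz)
          linarith [hnonI, ht0A, hid, hpos]


/-- **Theorem (upper bound).** Assume that for each `i` the collection `𝒯ᵢ` is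
non-empty, and for each `i` fix the data of a chosen `Tᵢ`: if `{xᵢ} ∈ 𝒯ᵢ`
(i.e. `xᵢ ∈ S`) put `g i = -1` and `m1 i = a i j = b j i = 0` for all `j`;
otherwise choose a `Tᵢ` of the second form, with set of exponents `M`
(whose least element is `m1 i`), connecting words given by `a i j`, `b j i`
for `j ≠ i`, and `g i` the Frobenius number of `M`.  Then `S^†` contains every
word of length at least
`∑ i, g i + q + (q-1) * (max_i m1 i) * (max_{i ≠ j} (a i j, b j i))`. -/
theorem iterShuffle_of_long (q : ℕ) (hq : 1 ≤ q)
    (S : Set (List (Fin q))) (hS : S.Finite)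
    (g : Fin q → ℤ) (m1 : Fin q → ℕ) (a b : Fin q → Fin q → ℕ)
    (hchoice : ∀ i : Fin q,
      ([i] ∈ S ∧ g i = -1 ∧ m1 i = 0 ∧ ∀ j : Fin q, a i j = 0 ∧ b j i = 0) ∨
      (∃ M : Finset ℕ,
        2 ≤ M.card ∧ (∀ n ∈ M, 2 ≤ n) ∧ M.gcd id = 1 ∧
        (∀ n ∈ M, List.replicate n i ∈ S) ∧
        (m1 i ∈ M ∧ ∀ n ∈ M, m1 i ≤ n) ∧
        (∀ j : Fin q, j ≠ i →
          1 ≤ a i j ∧ 1 ≤ b j i ∧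
          i :: List.replicate (a i j) j ∈ S ∧
          List.replicate (b j i) j ++ [i] ∈ S) ∧
        (∃ gn : ℕ, g i = (gn : ℤ) ∧
          ¬ (∃ c : ℕ → ℕ, gn = ∑ n ∈ M, c n * n) ∧
          ∀ N : ℕ, gn < N → ∃ c : ℕ → ℕ, N = ∑ n ∈ M, c n * n))) :
    ∀ y : List (Fin q),
      (∑ i, g i) + (q : ℤ) +
          ((q : ℤ) - 1) * ((Finset.univ.sup m1 : ℕ) : ℤ) *
            (((Finset.univ.sup fun i : Fin q => Finset.univ.sup fun j : Fin q =>
              if i = j then 0 else max (a i j) (b j i) : ℕ) : ℤ))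
        ≤ (y.length : ℤ) →
      IterShuffle S y := by
  intro y hlen
  set G := Finset.univ.sup m1 with hGdef
  set A := (Finset.univ.sup fun i : Fin q => Finset.univ.sup fun j : Fin q =>
      if i = j then 0 else max (a i j) (b j i)) with hAdef
  have hGp : ∀ i, m1 i ≤ G := fun i => Finset.le_sup (Finset.mem_univ i)
  have hAp : ∀ i j : Fin q, j ≠ i → a i j ≤ A ∧ b j i ≤ A := by
    intro i j hji
    have h1 : (if i = j then 0 else max (a i j) (b j i)) ≤
        Finset.univ.sup fun j => if i = j then 0 else max (a i j) (b j i) :=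
      Finset.le_sup (f := fun j => if i = j then 0 else max (a i j) (b j i))
        (Finset.mem_univ j)
    have h2 : (Finset.univ.sup fun j => if i = j then 0 else max (a i j) (b j i)) ≤ A :=
      Finset.le_sup
        (f := fun i => Finset.univ.sup fun j => if i = j then 0 else max (a i j) (b j i))
        (Finset.mem_univ i)
    rw [if_neg (Ne.symm hji)] at h1
    exact ⟨le_trans (le_trans (le_max_left _ _) h1) h2,
      le_trans (le_trans (le_max_right _ _) h1) h2⟩
  apply main_lemma S g m1 a b G A hGp hAp hchoice q Finset.univ y (by simp)
    (fun c _ => Finset.mem_univ c)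
  rw [show ((Finset.univ : Finset (Fin q)).card : ℤ) = (q : ℤ) by simp]
  exact hlen
end

section
/- Let q ≥ 1, m ≥ 3, and Σ = {x_1, …, x_q}. The set S = ⋃_{i=1}^q {x_i^m, x_i^{m+1}} ∪ ⋃_{i ≠ j} {x_i x_j^{m−1}, x_j^{m−1} x_i} over Σ has cardinality 2q², its shortest words have length m, and its iterated shuffle S^† is co-finite. -/
section helpers
variable {α : Type*}

theorem shuffle_nil_left_s8 (v : List α) : Shuffle [] v v := by
  induction v with
  | nil => exact .nil
  | cons a v ih => exact .right ih

theorem shuffle_append (u v : List α) : Shuffle u v (u ++ v) := by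
  induction u with
  | nil => simpa using shuffle_nil_left_s8 v
  | cons a u ih => exact .left ih

theorem shuffle_count [DecidableEq α] {u v w : List α} (h : Shuffle u v w) (a : α) :
    w.count a = u.count a + v.count a := by
  induction h with
  | nil => simp
  | left h ih => simp only [List.count_cons, ih]; ring
  | right h ih => simp only [List.count_cons, ih]; ring

theorem shuffle_length {u v w : List α} (h : Shuffle u v w) :
    w.length = u.length + v.length := by
  induction h with
  | nil => simp
  | left h ih => simp [ih]; omega
  | right h ih => simp [ih]; omega

theorem sublist_shuffle {u w : List α} (h : List.Sublist u w) : ∃ v, Shuffle u v w := by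
  induction h with
  | slnil => exact ⟨[], .nil⟩
  | cons a _ ih => obtain ⟨v, hv⟩ := ih; exact ⟨a :: v, .right hv⟩
  | cons_cons a _ ih => obtain ⟨v, hv⟩ := ih; exact ⟨v, .left hv⟩

theorem len_sum {q : ℕ} (w : List (Fin q)) : w.length = ∑ i : Fin q, w.count i := by
  induction w with
  | nil => simp
  | cons a w ih =>
    simp only [List.count_cons, List.length_cons, Finset.sum_add_distrib, ← ih]
    simp [Finset.sum_ite_eq', Finset.mem_univ]

theorem frob {m n : ℕ} (hm : 3 ≤ m) (hn : m * (m-1) ≤ n) : ∃ a b, n = a * m + b * (m+1) := by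
  have hm0 : 0 < m := by omega
  have hd : m - 1 ≤ n / m := by
    rw [Nat.le_div_iff_mul_le hm0]
    calc (m-1) * m = m * (m-1) := by ring
    _ ≤ n := hn
  have hmod : n % m < m := Nat.mod_lt _ hm0
  have hk : n % m ≤ n / m := by omega
  obtain ⟨t, ht⟩ : ∃ t, n / m = t + n % m := ⟨_, (Nat.sub_add_cancel hk).symm⟩
  refine ⟨t, n % m, ?_⟩
  calc n = m * (n / m) + n % m := (Nat.div_add_mod n m).symm
  _ = t * m + (n % m) * (m+1) := by rw [ht]; ring

end helpers

section core
variable {q m : ℕ} {S : Set (List (Fin q))}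

theorem iter_pure (h1 : ∀ i : Fin q, List.replicate m i ∈ S)
    (h2 : ∀ i : Fin q, List.replicate (m+1) i ∈ S) :
    ∀ a b (i : Fin q), IterShuffle S (List.replicate (a * m + b * (m+1)) i) := by
  intro a
  induction a with
  | zero =>
    intro b
    induction b with
    | zero => simpa using fun i : Fin q => IterShuffle.nil
    | succ b ih =>
      intro i
      have h : 0 * m + (b+1) * (m+1) = (m+1) + (0 * m + b * (m+1)) := by ring
      rw [h, List.replicate_add]
      exact .step (h2 i) (ih i) (shuffle_append _ _)
  | succ a ih =>
    intro b i
    have h : (a+1) * m + b * (m+1) = m + (a * m + b * (m+1)) := by ring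
    rw [h, List.replicate_add]
    exact .step (h1 i) (ih b i) (shuffle_append _ _)

theorem dominant (hm : 3 ≤ m)
    (h1 : ∀ i : Fin q, List.replicate m i ∈ S)
    (h2 : ∀ i : Fin q, List.replicate (m+1) i ∈ S)
    (h3 : ∀ i j : Fin q, i ≠ j → (i :: List.replicate (m-1) j) ∈ S)
    (h4 : ∀ i j : Fin q, i ≠ j → (List.replicate (m-1) j ++ [i]) ∈ S) :
    ∀ k (w : List (Fin q)) (j : Fin q), w.length = w.count j + k →
      (m-1) * k + m * (m-1) ≤ w.count j → IterShuffle S w := by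
  have hm1 : m - 1 + 1 = m := by omega
  intro k
  induction k with
  | zero =>
    intro w j hlen hc
    have hcl : w.count j = w.length := by omega
    have hw : w = List.replicate w.length j := by
      rw [List.eq_replicate_iff]
      exact ⟨rfl, fun b hb => ((List.count_eq_length).1 hcl b hb).symm⟩
    have hc' : m * (m-1) ≤ w.count j := by simpa using hc
    obtain ⟨a, b, hab⟩ := frob hm (hcl ▸ hc')
    rw [hw, hab]
    exact iter_pure h1 h2 a b j
  | succ k ih =>
    intro w j hlen hc
    have hmul : (m-1) * (k+1) = (m-1) * k + (m-1) := Nat.mul_succ _ _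
    have h5 : 3 * (m-1) ≤ m * (m-1) := Nat.mul_le_mul_right _ hm
    have hex : ∃ i ∈ w, i ≠ j := by
      by_contra hcon
      push_neg at hcon
      have : w.count j = w.length := List.count_eq_length.2 (fun b hb => (hcon b hb).symm)
      omega
    obtain ⟨i, hiw, hij⟩ := hex
    obtain ⟨s, t, hst⟩ := List.append_of_mem hiw
    have hcnt : w.count j = s.count j + t.count j := by
      rw [hst]
      simp [List.count_append, List.count_cons, hij, (Ne.symm hij)]
    have hside : m - 1 ≤ s.count j ∨ m - 1 ≤ t.count j := by
      by_contra hcon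
      push_neg at hcon
      obtain ⟨hA, hB⟩ := hcon
      have hz : 0 ≤ (m-1) * (k+1) := Nat.zero_le _
      linarith
    have key : ∀ u : List (Fin q), u ∈ S → u.length = m → u.count j = m - 1 →
        List.Sublist u w → IterShuffle S w := by
      intro u huS hul hucj hsub
      obtain ⟨v, hv⟩ := sublist_shuffle hsub
      have hvc : w.count j = u.count j + v.count j := shuffle_count hv j
      have hvl : w.length = u.length + v.length := shuffle_length hv
      refine .step huS (ih v j ?_ ?_) hv
      · omega
      · linarith
    rcases hside with hs | ht
    · refine key (List.replicate (m-1) j ++ [i]) (h4 i j hij) ?_ ?_ ?_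
      · simp; omega
      · simp [List.count_append, List.count_cons, hij, (Ne.symm hij)]
      · rw [hst]
        exact List.Sublist.append (List.replicate_sublist_iff.2 hs)
          (by simp)
    · refine key (i :: List.replicate (m-1) j) (h3 i j hij) ?_ ?_ ?_
      · simp; omega
      · simp [List.count_cons, hij, (Ne.symm hij)]
      · rw [hst]
        exact ((List.replicate_sublist_iff.2 ht).cons₂ i).trans
          (List.sublist_append_right s (i :: t))

theorem reduce (hm : 3 ≤ m) (hq : 1 ≤ q)
    (h1 : ∀ i : Fin q, List.replicate m i ∈ S)
    (h2 : ∀ i : Fin q, List.replicate (m+1) i ∈ S)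
    (h3 : ∀ i j : Fin q, i ≠ j → (i :: List.replicate (m-1) j) ∈ S)
    (h4 : ∀ i j : Fin q, i ≠ j → (List.replicate (m-1) j ++ [i]) ∈ S) :
    ∀ n (w : List (Fin q)) (j : Fin q), w.length ≤ n →
      (m-1) * ((q-1) * (m-1)) + m * (m-1) ≤ w.count j → IterShuffle S w := by
  intro n
  induction n with
  | zero =>
    intro w j hl hc
    have h0 : w.count j ≤ w.length := List.count_le_length
    have hpos : 0 < m * (m-1) := Nat.mul_pos (by omega) (by omega)
    have hz : 0 ≤ (m-1) * ((q-1) * (m-1)) := Nat.zero_le _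
    linarith
  | succ n ih =>
    intro w j hl hc
    by_cases hex : ∃ i, i ≠ j ∧ m ≤ w.count i
    · obtain ⟨i, hij, hi⟩ := hex
      have hsub : List.Sublist (List.replicate m i) w :=
        List.replicate_sublist_iff.2 hi
      obtain ⟨v, hv⟩ := sublist_shuffle hsub
      have hvc : w.count j = (List.replicate m i).count j + v.count j := shuffle_count hv j
      have huc : (List.replicate m i).count j = 0 := by
        simp [List.count_replicate, hij]
      have hvl : w.length = m + v.length := by
        have := shuffle_length hv; simpa using this
      exact .step (h1 i) (ih v j (by omega) (by omega)) hv
    · push_neg at hex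
      have hsum : w.length = w.count j + ∑ i ∈ Finset.univ.erase j, w.count i := by
        rw [len_sum w, ← Finset.add_sum_erase _ _ (Finset.mem_univ j)]
      have hb : ∑ i ∈ Finset.univ.erase j, w.count i ≤ (q-1) * (m-1) := by
        calc ∑ i ∈ Finset.univ.erase j, w.count i
            ≤ ∑ _i ∈ Finset.univ.erase j, (m-1) := by
              refine Finset.sum_le_sum fun i hi => ?_
              have := hex i (Finset.ne_of_mem_erase hi)
              omega
          _ = (Finset.univ.erase j).card * (m-1) := by
              rw [Finset.sum_const, smul_eq_mul]
          _ = (q-1) * (m-1) := by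
              rw [Finset.card_erase_of_mem (Finset.mem_univ j), Finset.card_univ,
                Fintype.card_fin]
      have hmono : (m-1) * (∑ i ∈ Finset.univ.erase j, w.count i) ≤ (m-1) * ((q-1) * (m-1)) :=
        Nat.mul_le_mul_left _ hb
      exact dominant hm h1 h2 h3 h4 _ w j hsum (by linarith)

theorem cofin (hm : 3 ≤ m) (hq : 1 ≤ q)
    (h1 : ∀ i : Fin q, List.replicate m i ∈ S)
    (h2 : ∀ i : Fin q, List.replicate (m+1) i ∈ S)
    (h3 : ∀ i j : Fin q, i ≠ j → (i :: List.replicate (m-1) j) ∈ S)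
    (h4 : ∀ i j : Fin q, i ≠ j → (List.replicate (m-1) j ++ [i]) ∈ S) :
    {w : List (Fin q) | ¬ IterShuffle S w}.Finite := by
  set D := (m-1) * ((q-1) * (m-1)) + m * (m-1) with hD
  have hD1 : 1 ≤ D := by
    have hpos : 0 < m * (m-1) := Nat.mul_pos (by omega) (by omega)
    omega
  refine Set.Finite.subset (List.finite_length_lt (Fin q) (q * D)) ?_
  intro w hw
  simp only [Set.mem_setOf_eq] at hw ⊢
  by_contra hlong
  push_neg at hlong
  have hex : ∃ j : Fin q, D ≤ w.count j := by
    by_contra hcon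
    push_neg at hcon
    have : w.length ≤ q * (D - 1) := by
      rw [len_sum w]
      calc ∑ i : Fin q, w.count i ≤ ∑ _i : Fin q, (D-1) := by
            refine Finset.sum_le_sum fun i _ => ?_
            have := hcon i; omega
        _ = q * (D-1) := by simp [Finset.sum_const, Finset.card_univ, mul_comm]
    have hqD : q * D = q * (D-1) + q := by
      calc q * D = q * ((D-1) + 1) := by rw [Nat.sub_add_cancel hD1]
        _ = q * (D-1) + q := Nat.mul_succ _ _
    omega
  obtain ⟨j, hj⟩ := hex
  exact hw (reduce hm hq h1 h2 h3 h4 w.length w j le_rfl hj)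

end core

def pword {q : ℕ} (m : ℕ) (p : Fin q × Fin q × Bool) : List (Fin q) :=
  if p.1 = p.2.1 then
    (if p.2.2 then List.replicate (m+1) p.1 else List.replicate m p.1)
  else
    (if p.2.2 then List.replicate (m-1) p.2.1 ++ [p.1] else p.1 :: List.replicate (m-1) p.2.1)

theorem pword_inj {q m : ℕ} (hm : 3 ≤ m) : Function.Injective (pword (q := q) m) := by
  have em1 : ∀ x : Fin q, List.replicate m x = x :: List.replicate (m-1) x := by
    intro x
    conv_lhs => rw [show m = (m-1)+1 from by omega]
    rw [List.replicate_succ]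
  have em' : ∀ x : Fin q, List.replicate m x = List.replicate (m-1) x ++ [x] := by
    intro x
    conv_lhs => rw [show m = (m-1)+1 from by omega]
    rw [List.replicate_succ']
  have em2 : ∀ x : Fin q, List.replicate (m-1) x = x :: List.replicate (m-2) x := by
    intro x
    conv_lhs => rw [show m-1 = (m-2)+1 from by omega]
    rw [List.replicate_succ]
  have em3 : ∀ x : Fin q, List.replicate (m-1) x = x :: x :: List.replicate (m-3) x := by
    intro x
    conv_lhs => rw [show m-1 = (m-3)+1+1 from by omega]
    rw [List.replicate_succ, List.replicate_succ]
  have hm10 : m - 1 ≠ 0 := by omega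
  have hm0 : m ≠ 0 := by omega
  rintro ⟨i, j, b⟩ ⟨i', j', b'⟩ h
  simp only [pword] at h
  by_cases hij : i = j
  · by_cases hij' : i' = j'
    · rw [if_pos hij, if_pos hij'] at h
      cases b <;> cases b' <;>
        simp only [Bool.false_eq_true, if_true, if_false] at h
      · have := List.replicate_right_injective hm0 h
        simp_all
      · have := congrArg List.length h; simp at this <;> omega
      · have := congrArg List.length h; simp at this <;> omega
      · have := List.replicate_right_injective (Nat.succ_ne_zero m) h
        simp_all
    · rw [if_pos hij, if_neg hij'] at h
      cases b <;> cases b' <;>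
        simp only [Bool.false_eq_true, if_true, if_false] at h
      · -- pure false / mixed false
        rw [em1 i] at h
        rw [List.cons.injEq] at h
        exact absurd (h.1 ▸ (List.replicate_right_injective hm10 h.2)) hij'
      · -- pure false / mixed true
        rw [em' i] at h
        obtain ⟨h1, h2⟩ := List.append_inj h (by simp)
        have hx : i = j' := List.replicate_right_injective hm10 h1
        have hy : i = i' := by simpa using h2
        exact absurd (hy ▸ hx) hij'
      · have := congrArg List.length h; simp at this; omega
      · have := congrArg List.length h; simp at this; omega
  · by_cases hij' : i' = j'
    · rw [if_neg hij, if_pos hij'] at h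
      cases b <;> cases b' <;>
        simp only [Bool.false_eq_true, if_true, if_false] at h
      · rw [em1 i'] at h
        rw [List.cons.injEq] at h
        exact absurd (h.1 ▸ (List.replicate_right_injective hm10 h.2).symm) hij
      · have := congrArg List.length h; simp at this; omega
      · rw [em' i'] at h
        obtain ⟨h1, h2⟩ := List.append_inj h (by simp)
        have hx : j = i' := List.replicate_right_injective hm10 h1
        have hy : i = i' := by simpa using h2
        exact absurd (hy.trans hx.symm) hij
      · have := congrArg List.length h; simp at this; omega
    · rw [if_neg hij, if_neg hij'] at h
      cases b <;> cases b' <;>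
        simp only [Bool.false_eq_true, if_true, if_false] at h
      · -- mixed false / mixed false
        rw [List.cons.injEq] at h
        have := List.replicate_right_injective hm10 h.2
        simp_all
      · -- mixed false / mixed true
        rw [em2 j, em3 j', List.cons_append, List.cons_append] at h
        rw [List.cons.injEq, List.cons.injEq] at h
        exact absurd (h.1.trans h.2.1.symm) hij
      · -- mixed true / mixed false
        rw [em2 j', em3 j, List.cons_append, List.cons_append] at h
        rw [List.cons.injEq, List.cons.injEq] at h
        exact absurd (h.1.symm.trans h.2.1) hij'
      · -- mixed true / mixed true
        obtain ⟨h1, h2⟩ := List.append_inj h (by simp)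
        have := List.replicate_right_injective hm10 h1
        simp only [List.cons.injEq] at h2
        simp_all

/-- For `q ≥ 1` and `m ≥ 3`, the set
`S = ⋃ᵢ {xᵢ^m, xᵢ^{m+1}} ∪ ⋃_{i ≠ j} {xᵢxⱼ^{m-1}, xⱼ^{m-1}xᵢ}` over a `q`-letter
alphabet has cardinality `2q²`, its shortest words have length `m`, and its
iterated shuffle is co-finite. -/
theorem proto_m_ge_three_tight (q m : ℕ) (hq : 1 ≤ q) (hm : 3 ≤ m)
    (S : Set (List (Fin q)))
    (hS : S = {w | ∃ i : Fin q, w = List.replicate m i ∨ w = List.replicate (m + 1) i} ∪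
              {w | ∃ i j : Fin q, i ≠ j ∧
                (w = i :: List.replicate (m - 1) j ∨
                 w = List.replicate (m - 1) j ++ [i])}) :
    S.ncard = 2 * q ^ 2 ∧
    (∃ w ∈ S, w.length = m) ∧ (∀ w ∈ S, m ≤ w.length) ∧
    {w : List (Fin q) | ¬ IterShuffle S w}.Finite := by
  have h1 : ∀ i : Fin q, List.replicate m i ∈ S := fun i => by
    rw [hS]; exact Or.inl ⟨i, Or.inl rfl⟩
  have h2 : ∀ i : Fin q, List.replicate (m+1) i ∈ S := fun i => by
    rw [hS]; exact Or.inl ⟨i, Or.inr rfl⟩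
  have h3 : ∀ i j : Fin q, i ≠ j → (i :: List.replicate (m-1) j) ∈ S := fun i j hij => by
    rw [hS]; exact Or.inr ⟨i, j, hij, Or.inl rfl⟩
  have h4 : ∀ i j : Fin q, i ≠ j → (List.replicate (m-1) j ++ [i]) ∈ S := fun i j hij => by
    rw [hS]; exact Or.inr ⟨i, j, hij, Or.inr rfl⟩
  refine ⟨?_, ?_, ?_, cofin hm hq h1 h2 h3 h4⟩
  · -- cardinality
    have hrange : S = Set.range (pword (q := q) m) := by
      ext w
      constructor
      · intro hw
        rw [hS] at hw
        rcases hw with ⟨i, hi | hi⟩ | ⟨i, j, hij, hij2⟩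
        · exact ⟨(i, i, false), by simp [pword, hi]⟩
        · exact ⟨(i, i, true), by simp [pword, hi]⟩
        · rcases hij2 with hw | hw
          · exact ⟨(i, j, false), by simp [pword, hij, hw]⟩
          · exact ⟨(i, j, true), by simp [pword, hij, hw]⟩
      · rintro ⟨⟨i, j, b⟩, rfl⟩
        by_cases hij : i = j <;> cases b <;> simp only [pword, hij, if_pos, if_neg,
          Bool.false_eq_true, if_true, if_false, ite_true, ite_false]
        · exact h1 j
        · exact h2 j
        · exact h3 i j hij
        · exact h4 i j hij
    rw [hrange, ← Set.image_univ, Set.ncard_image_of_injective _ (pword_inj hm),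
      Set.ncard_univ, Nat.card_eq_fintype_card]
    simp [Fintype.card_prod]
    ring
  · -- shortest word
    refine ⟨List.replicate m ⟨0, hq⟩, h1 _, by simp⟩
  · -- all words have length ≥ m
    intro w hw
    rw [hS] at hw
    rcases hw with ⟨i, hi | hi⟩ | ⟨i, j, hij, hw | hw⟩ <;> subst_vars <;> simp <;> omega
end
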